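/- Let $1\le p\le q<\infty$ and $(r_j)_{j\in\Lambda}$, $(s_j)_{j\in\Lambda}$ be sequences of positive reals. There exists $C>0$ with $\|x\|_{s,q}\le C\|x\|_{r,p}$ for all $x\in\ell^p_r$ (i.e., a continuous embedding $\ell^p_r\subset\ell^q_s$) if and only if the sequence $s_j r_j^{-1}$ is bounded. -/

import Mathlib

open scoped ENNReal
noncomputable section

variable {Λ : Type*}


/-- Weighted `ℓ^p` quasi-norm (value in `ℝ≥0∞`). -/
def wnorm (ω : Λ → ℝ) (p : ℝ) (x : Λ → ℝ) : ℝ≥0∞ :=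
  (∑' j, ENNReal.ofReal (ω j ^ p * |x j| ^ p)) ^ (1 / p)

/-- The interpolating weights `(ω_t)_j = (a_j^{2t-2} r_j^{2-t})^{1/t}`. -/
def omegaWeight (a r : Λ → ℝ) (t : ℝ) : Λ → ℝ :=
  fun j => (a j ^ (2 * t - 2) * r j ^ (2 - t)) ^ (1 / t)

/-- Weighted `ℓ¹` norm `‖x‖_{r,1} = ∑ r_j |x_j|`. -/
def rnorm1 (r : Λ → ℝ) (x : Λ → ℝ) : ℝ≥0∞ := ∑' j, ENNReal.ofReal (r j * |x j|)

/-- Weighted `ℓ²` norm `‖x‖_{a,2} = (∑ a_j² x_j²)^{1/2}`. -/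
def anorm2 (a : Λ → ℝ) (x : Λ → ℝ) : ℝ≥0∞ :=
  (∑' j, ENNReal.ofReal (a j ^ 2 * x j ^ 2)) ^ ((1 : ℝ) / 2)

/-- The sum `∑_j a_j⁻² r_j² 𝟙_{a_j⁻² r_j α < |x_j|}`. -/
def kSum (a r : Λ → ℝ) (α : ℝ) (x : Λ → ℝ) : ℝ≥0∞ :=
  ∑' j, ENNReal.ofReal (if r j * α / a j ^ 2 < |x j| then r j ^ 2 / a j ^ 2 else 0)

/-- The weak quasi-norm `‖x‖_{k_t} = sup_{α>0} α (kSum α x)^{1/t}`. -/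
def knorm (a r : Λ → ℝ) (t : ℝ) (x : Λ → ℝ) : ℝ≥0∞ :=
  ⨆ α ∈ Set.Ioi (0 : ℝ), ENNReal.ofReal α * (kSum a r α x) ^ (1 / t)

/-- Hard thresholding operator. -/
def Tthresh (a r : Λ → ℝ) (α : ℝ) (x : Λ → ℝ) : Λ → ℝ :=
  fun j => if r j * α / a j ^ 2 < |x j| then x j else 0


lemma tsum_rpow_antitone {f : Λ → ℝ≥0∞} {p q : ℝ} (hp : 0 < p) (hpq : p ≤ q) :
    (∑' j, f j ^ q) ^ (1 / q) ≤ (∑' j, f j ^ p) ^ (1 / p) := by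
  have hq : 0 < q := hp.trans_le hpq
  set S : ℝ≥0∞ := (∑' j, f j ^ p) ^ (1 / p) with hS
  have hSp : S ^ p = ∑' j, f j ^ p := by
    rw [hS, ← ENNReal.rpow_mul, one_div, inv_mul_cancel₀ hp.ne', ENNReal.rpow_one]
  have hfS : ∀ j, f j ≤ S := by
    intro j
    rw [← ENNReal.rpow_le_rpow_iff hp, hSp]
    exact ENNReal.le_tsum j
  rcases eq_or_ne S ⊤ with h | h
  · simp [h]
  rcases eq_or_ne S 0 with h0 | h0
  · have hz : ∀ j, f j = 0 := fun j => le_antisymm (h0 ▸ hfS j) zero_le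
    simp only [hz, ENNReal.zero_rpow_of_pos hq, tsum_zero, h0]
    exact (ENNReal.zero_rpow_of_pos (by positivity)).le
  · have key : (∑' j, f j ^ q) ≤ S ^ q := by
      calc ∑' j, f j ^ q ≤ ∑' j, f j ^ p * S ^ (q - p) := by
            refine ENNReal.tsum_le_tsum fun j => ?_
            rcases eq_or_ne (f j) 0 with hj | hj
            · simp [hj, ENNReal.zero_rpow_of_pos hq]
            · have hjt : f j ≠ ⊤ := fun ht => h (top_le_iff.mp (ht ▸ hfS j))
              have hsplit : f j ^ q = f j ^ p * f j ^ (q - p) := by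
                rw [← ENNReal.rpow_add _ _ hj hjt]; ring_nf
              rw [hsplit]
              exact mul_le_mul_right (ENNReal.rpow_le_rpow (hfS j) (by linarith)) _
        _ = S ^ p * S ^ (q - p) := by rw [ENNReal.tsum_mul_right, hSp]
        _ = S ^ q := by rw [← ENNReal.rpow_add _ _ h0 h]; ring_nf
    calc (∑' j, f j ^ q) ^ (1 / q) ≤ (S ^ q) ^ (1 / q) :=
          ENNReal.rpow_le_rpow key (one_div_nonneg.mpr hq.le)
      _ = S := by rw [← ENNReal.rpow_mul, mul_one_div, div_self hq.ne', ENNReal.rpow_one]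

theorem stmt11 (r s : Λ → ℝ) (hr : ∀ j, 0 < r j) (hs : ∀ j, 0 < s j)
    (p q : ℝ) (hp : 1 ≤ p) (hpq : p ≤ q) :
    (∃ C > (0:ℝ), ∀ x : Λ → ℝ, wnorm s q x ≤ ENNReal.ofReal C * wnorm r p x) ↔
      ∃ C : ℝ, ∀ j, s j / r j ≤ C := by
  classical
  have hp0 : (0:ℝ) < p := lt_of_lt_of_le one_pos hp
  have hq0 : (0:ℝ) < q := lt_of_lt_of_le hp0 hpq
  constructor
  · rintro ⟨C, hC, hbound⟩
    refine ⟨C, fun j => ?_⟩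
    have hb := hbound (fun i => if i = j then 1 else 0)
    have hw : ∀ (ω : Λ → ℝ) (t : ℝ), (∀ i, 0 < ω i) → 0 < t →
        wnorm ω t (fun i => if i = j then 1 else 0) = ENNReal.ofReal (ω j) := by
      intro ω t hω ht
      unfold wnorm
      rw [tsum_eq_single j (by
        intro i hi
        simp [hi, Real.zero_rpow ht.ne'])]
      simp only [if_true, abs_one, Real.one_rpow, mul_one]
      rw [ENNReal.ofReal_rpow_of_pos (Real.rpow_pos_of_pos (hω j) t),
        ← Real.rpow_mul (hω j).le, mul_one_div, div_self ht.ne', Real.rpow_one]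
    rw [hw s q hs hq0, hw r p hr hp0, ← ENNReal.ofReal_mul hC.le] at hb
    have hsr : s j ≤ C * r j := by
      rwa [ENNReal.ofReal_le_ofReal_iff (mul_nonneg hC.le (hr j).le)] at hb
    rw [div_le_iff₀ (hr j)]
    exact hsr
  · rintro ⟨C, hC⟩
    set D := max C 1 with hD
    have hD1 : (0:ℝ) < D := lt_of_lt_of_le one_pos (le_max_right _ _)
    have hsD : ∀ j, s j ≤ D * r j := by
      intro j
      have h := (hC j).trans (le_max_left C 1)
      rwa [div_le_iff₀ (hr j)] at h
    refine ⟨D, hD1, fun x => ?_⟩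
    have step1 : wnorm s q x ≤ ENNReal.ofReal D * wnorm r q x := by
      unfold wnorm
      have hts : (∑' j, ENNReal.ofReal (s j ^ q * |x j| ^ q)) ≤
          ENNReal.ofReal (D ^ q) * ∑' j, ENNReal.ofReal (r j ^ q * |x j| ^ q) := by
        rw [← ENNReal.tsum_mul_left]
        refine ENNReal.tsum_le_tsum fun j => ?_
        rw [← ENNReal.ofReal_mul (Real.rpow_nonneg hD1.le q)]
        refine ENNReal.ofReal_le_ofReal ?_
        rw [← mul_assoc, ← Real.mul_rpow hD1.le (hr j).le]
        exact mul_le_mul_of_nonneg_right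
          (Real.rpow_le_rpow (hs j).le (hsD j) hq0.le)
          (Real.rpow_nonneg (abs_nonneg _) q)
      calc (∑' j, ENNReal.ofReal (s j ^ q * |x j| ^ q)) ^ (1/q)
          ≤ (ENNReal.ofReal (D ^ q) * ∑' j, ENNReal.ofReal (r j ^ q * |x j| ^ q)) ^ (1/q) :=
            ENNReal.rpow_le_rpow hts (one_div_nonneg.mpr hq0.le)
        _ = ENNReal.ofReal D * (∑' j, ENNReal.ofReal (r j ^ q * |x j| ^ q)) ^ (1/q) := by
            rw [ENNReal.mul_rpow_of_nonneg _ _ (one_div_nonneg.mpr hq0.le),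
              ← ENNReal.ofReal_rpow_of_pos hD1,
              ← ENNReal.rpow_mul, mul_one_div, div_self hq0.ne', ENNReal.rpow_one]
    have step2 : wnorm r q x ≤ wnorm r p x := by
      unfold wnorm
      have he : ∀ (t : ℝ), 0 < t → ∀ j, ENNReal.ofReal (r j ^ t * |x j| ^ t) =
          ENNReal.ofReal (r j * |x j|) ^ t := by
        intro t ht j
        rw [ENNReal.ofReal_rpow_of_nonneg (mul_nonneg (hr j).le (abs_nonneg _)) ht.le,
          Real.mul_rpow (hr j).le (abs_nonneg _)]
      simp_rw [he q hq0, he p hp0]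
      exact tsum_rpow_antitone hp0 hpq
    calc wnorm s q x ≤ ENNReal.ofReal D * wnorm r q x := step1
      _ ≤ ENNReal.ofReal D * wnorm r p x := mul_le_mul_right step2 _
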